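/- Fix a constant C ≥ 0 and a finite nonempty set V. For every ε > 0 there exists δ > 0 such that: for every probability distribution p on V with 1 - max_{x∈V} p(x) < δ, every probability distribution π on V with D_KL(π ‖ p) ≤ C, and every subset A ⊆ V, one has π(A) - p(A) ≤ ε. Equivalently, as the off-mode mass 1 - max_x p(x) tends to 0, the supremum over KL-budget-C distributions π and over subsets A of the mass shift π(A) - p(A) tends to 0. -/
import Mathlib


open Real

/-- Termwise KL contribution `p·log(p/q)` with the conventions
`0·log(0/q) = 0`, `0·log(0/0) = 0`, and `b·log(b/0) = +∞` for `b > 0`,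
valued in the extended reals `[-∞, ∞]`. -/
noncomputable def klTerm (p q : ℝ) : EReal :=
  if p = 0 then 0 else if q = 0 then ⊤ else ((p * Real.log (p / q) : ℝ) : EReal)

/-- Binary Kullback–Leibler divergence `d_kl(l ‖ q)` between the two-point
distributions `(l, 1 - l)` and `(q, 1 - q)`. -/
noncomputable def dkl (l q : ℝ) : EReal :=
  klTerm l q + klTerm (1 - l) (1 - q)

/-- Kullback–Leibler divergence `D_KL(μ ‖ p)` between distributions on a finite type. -/
noncomputable def DKL {V : Type*} [Fintype V] (μ p : V → ℝ) : EReal :=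
  ∑ x, klTerm (μ x) (p x)

lemma ereal_coe_sum {V : Type*} (s : Finset V) (f : V → ℝ) :
    ((∑ x ∈ s, f x : ℝ) : EReal) = ∑ x ∈ s, ((f x : ℝ) : EReal) := by
  induction s using Finset.cons_induction with
  | empty => simp
  | cons a s ha ih => rw [Finset.sum_cons, Finset.sum_cons, EReal.coe_add, ih]

lemma neg_one_le_mul_log {x : ℝ} (hx : 0 ≤ x) : -1 ≤ x * Real.log x := by
  rcases eq_or_lt_of_le hx with h | h
  · simp [← h]
  · have h1 : Real.log x⁻¹ ≤ x⁻¹ - 1 := Real.log_le_sub_one_of_pos (by positivity)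
    rw [Real.log_inv] at h1
    have h2 : 0 < x⁻¹ := by positivity
    have h3 : x * x⁻¹ = 1 := mul_inv_cancel₀ (ne_of_gt h)
    nlinarith [mul_le_mul_of_nonneg_left h1 (le_of_lt h)]

/-- vanishing capacity. Fix `C ≥ 0`. For every `ε > 0` there is `δ > 0`
such that for every distribution `p` with off-mode mass `1 - max_x p x < δ`, every
distribution `μ` with `D_KL(μ‖p) ≤ C`, and every `A ⊆ V`, we have `μ(A) - p(A) ≤ ε`. -/
theorem capacity_vanish {V : Type*} [Fintype V] [Nonempty V] (C : ℝ) (hC : 0 ≤ C) :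
    ∀ ε > (0 : ℝ), ∃ δ > (0 : ℝ),
      ∀ p : V → ℝ, (∀ x, 0 ≤ p x) → (∀ x, p x ≤ 1) → (∑ x, p x = 1) →
        1 - Finset.univ.sup' Finset.univ_nonempty p < δ →
      ∀ μ : V → ℝ, (∀ x, 0 ≤ μ x) → (∀ x, μ x ≤ 1) → (∑ x, μ x = 1) →
        DKL μ p ≤ (C : EReal) →
      ∀ A : Finset V, (∑ x ∈ A, μ x) - (∑ x ∈ A, p x) ≤ ε := by
  classical
  intro ε hε
  set n : ℝ := (Fintype.card V : ℝ) with hn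
  have hn1 : 1 ≤ n := by
    have : 1 ≤ Fintype.card V := Fintype.card_pos
    rw [hn]; exact_mod_cast this
  set δ0 : ℝ := Real.exp (-((C + n + 1) / ε)) with hδ0
  have hδ0pos : 0 < δ0 := Real.exp_pos _
  refine ⟨min ε δ0, lt_min hε hδ0pos, ?_⟩
  set δ : ℝ := min ε δ0 with hδdef
  intro p hp0 hp1 hpsum hmax μ hμ0 hμ1 hμsum hKL A
  obtain ⟨x0, -, hx0⟩ := Finset.exists_mem_eq_sup' Finset.univ_nonempty p
  rw [hx0] at hmax
  have hδ0lt1 : δ0 < 1 := by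
    rw [hδ0, Real.exp_lt_one_iff]
    have : 0 < (C + n + 1) / ε := by positivity
    linarith
  have hδpos : 0 < δ := lt_min hε hδ0pos
  have hδε : δ ≤ ε := min_le_left _ _
  have hδδ0 : δ ≤ δ0 := min_le_right _ _
  have hδlt1 : δ < 1 := lt_of_le_of_lt hδδ0 hδ0lt1
  have hpx0pos : 0 < p x0 := by linarith
  have hlogδ : Real.log δ ≤ -((C + n + 1) / ε) := by
    calc Real.log δ ≤ Real.log δ0 := Real.log_le_log hδpos hδδ0
    _ = -((C + n + 1) / ε) := Real.log_exp _
  set L : ℝ := -Real.log δ with hL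
  have hLbound : (C + n + 1) / ε ≤ L := by rw [hL]; linarith
  have hLpos : 0 < L := lt_of_lt_of_le (by positivity) hLbound
  -- p x ≤ 1 - p x0 for x ≠ x0
  have hpsmall : ∀ x, x ≠ x0 → p x < δ := by
    intro x hx
    have hsub : ({x, x0} : Finset V) ⊆ Finset.univ := Finset.subset_univ _
    have hpair : ∑ y ∈ ({x, x0} : Finset V), p y = p x + p x0 := by
      rw [Finset.sum_pair hx]
    have hle : ∑ y ∈ ({x, x0} : Finset V), p y ≤ ∑ y, p y :=
      Finset.sum_le_sum_of_subset_of_nonneg hsub (fun y _ _ => hp0 y)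
    rw [hpair, hpsum] at hle
    linarith
  -- per-term lower bound on klTerm
  set h : V → ℝ := fun x => -1 + (if x = x0 then 0 else μ x) * L with hh
  have hterm : ∀ x : V, ((h x : ℝ) : EReal) ≤ klTerm (μ x) (p x) := by
    intro x
    rw [klTerm]
    by_cases hμx : μ x = 0
    · rw [if_pos hμx]
      have : h x ≤ 0 := by
        rw [hh]; by_cases hxx : x = x0 <;> simp [hxx, hμx]
      exact_mod_cast this
    · rw [if_neg hμx]
      by_cases hpx : p x = 0
      · rw [if_pos hpx]; exact le_top
      · rw [if_neg hpx]
        rw [EReal.coe_le_coe_iff]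
        have hμpos : 0 < μ x := lt_of_le_of_ne (hμ0 x) (Ne.symm hμx)
        have hppos : 0 < p x := lt_of_le_of_ne (hp0 x) (Ne.symm hpx)
        have hlogdiv : Real.log (μ x / p x) = Real.log (μ x) - Real.log (p x) :=
          Real.log_div hμx hpx
        have hxlogx : -1 ≤ μ x * Real.log (μ x) := neg_one_le_mul_log (hμ0 x)
        by_cases hxx : x = x0
        · subst hxx
          have hlogp : Real.log (p x) ≤ 0 := Real.log_nonpos (hp0 x) (hp1 x)
          rw [hh]; simp only [eq_self_iff_true, if_true]
          rw [hlogdiv]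
          nlinarith
        · have hpδ : p x < δ := hpsmall x hxx
          have hlogp : Real.log (p x) ≤ Real.log δ := Real.log_le_log hppos hpδ.le
          rw [hh]; simp only [if_neg hxx]
          rw [hlogdiv, hL]
          nlinarith
  -- sum the bounds
  have hsumh : ((∑ x, h x : ℝ) : EReal) ≤ (C : EReal) := by
    calc ((∑ x, h x : ℝ) : EReal) = ∑ x, ((h x : ℝ) : EReal) := ereal_coe_sum _ _
    _ ≤ ∑ x, klTerm (μ x) (p x) := Finset.sum_le_sum (fun x _ => hterm x)
    _ = DKL μ p := rfl
    _ ≤ (C : EReal) := hKL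
  rw [EReal.coe_le_coe_iff] at hsumh
  -- compute the sum of h
  have hsum_eval : ∑ x, h x = -n + (1 - μ x0) * L := by
    rw [hh]
    rw [Finset.sum_add_distrib, ← Finset.sum_mul]
    have h1 : ∑ _x : V, (-1 : ℝ) = -n := by
      rw [Finset.sum_const, hn]; simp [mul_comm]
    have h2 : ∑ x : V, (if x = x0 then 0 else μ x) = 1 - μ x0 := by
      have : ∀ x : V, (if x = x0 then 0 else μ x) = μ x - (if x = x0 then μ x else 0) := by
        intro x; by_cases hxx : x = x0 <;> simp [hxx]
      rw [Finset.sum_congr rfl (fun x _ => this x), Finset.sum_sub_distrib,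
        Finset.sum_ite_eq' Finset.univ x0 μ, if_pos (Finset.mem_univ x0), hμsum]
    rw [h1, h2]
  rw [hsum_eval] at hsumh
  -- deduce 1 - μ x0 ≤ ε
  have hmass : 1 - μ x0 ≤ ε := by
    by_contra hcon
    push_neg at hcon
    have hεL : ε * L ≥ C + n + 1 := by
      have := (div_le_iff₀ hε).mp hLbound
      linarith [mul_comm L ε]
    nlinarith
  -- conclude
  by_cases hx0A : x0 ∈ A
  · have hμA : ∑ x ∈ A, μ x ≤ 1 := by
      rw [← hμsum]
      exact Finset.sum_le_sum_of_subset_of_nonneg (Finset.subset_univ A)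
        (fun y _ _ => hμ0 y)
    have hpA : p x0 ≤ ∑ x ∈ A, p x :=
      Finset.single_le_sum (fun y _ => hp0 y) hx0A
    linarith
  · have hA : A ⊆ Finset.univ.erase x0 := by
      intro y hy
      exact Finset.mem_erase.mpr ⟨fun hcon => hx0A (hcon ▸ hy), Finset.mem_univ y⟩
    have hμA : ∑ x ∈ A, μ x ≤ 1 - μ x0 := by
      calc ∑ x ∈ A, μ x ≤ ∑ x ∈ Finset.univ.erase x0, μ x :=
            Finset.sum_le_sum_of_subset_of_nonneg hA (fun y _ _ => hμ0 y)
      _ = 1 - μ x0 := by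
            rw [Finset.sum_erase_eq_sub (Finset.mem_univ x0), hμsum]
    have hpA : 0 ≤ ∑ x ∈ A, p x := Finset.sum_nonneg (fun y _ => hp0 y)
    linarith
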